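/- For n ≥ 3, every invertible linear map F ∈ GL_n(F_2) induces an even permutation of the set F_2^n. -/

import Mathlib

set_option maxHeartbeats 1000000

open Matrix

/-- A matrix squaring to 1 gives a linear equivalence via `mulVecLin`. -/
def equivOfInvol {n : ℕ} (P : Matrix (Fin n) (Fin n) (ZMod 2)) (h : P * P = 1) :
    (Fin n → ZMod 2) ≃ₗ[ZMod 2] (Fin n → ZMod 2) :=
  LinearEquiv.ofLinear P.mulVecLin P.mulVecLin
    (by rw [← Matrix.mulVecLin_mul, h, Matrix.mulVecLin_one])
    (by rw [← Matrix.mulVecLin_mul, h, Matrix.mulVecLin_one])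

lemma sign_aux (n : ℕ) (hn : 3 ≤ n) (M : Matrix (Fin n) (Fin n) (ZMod 2))
    (hM : M.det ≠ 0) :
    ∀ F : (Fin n → ZMod 2) ≃ₗ[ZMod 2] (Fin n → ZMod 2),
      F.toLinearMap = M.mulVecLin →
      Equiv.Perm.sign (F.toEquiv : Equiv.Perm (Fin n → ZMod 2)) = 1 := by
  apply Matrix.diagonal_transvection_induction_of_det_ne_zero _ M hM
  · -- diagonal case
    intro D hD F hF
    have hone : ∀ x : ZMod 2, x ≠ 0 → x = 1 := by decide
    have hD1 : Matrix.diagonal D = 1 := by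
      ext a b
      rcases eq_or_ne a b with rfl | hab
      · have hDa : D a ≠ 0 := by
          intro h0
          apply hD
          rw [Matrix.det_diagonal]
          exact Finset.prod_eq_zero (Finset.mem_univ a) h0
        simp [Matrix.diagonal_apply_eq, hone _ hDa, Matrix.one_apply_eq]
      · simp [Matrix.diagonal_apply_ne _ hab, Matrix.one_apply_ne hab]
    have : F.toEquiv = Equiv.refl _ := by
      apply Equiv.ext; intro x
      have h1 := DFunLike.congr_fun hF x
      rw [hD1, Matrix.mulVecLin_one] at h1
      exact h1
    rw [this]
    simp
  · -- transvection case
    intro t F hF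
    obtain ⟨i, j, hij, c⟩ := t
    obtain ⟨k, hk⟩ : ∃ k : Fin n, k ∉ ({i, j} : Finset (Fin n)) := by
      by_contra h
      push_neg at h
      have h1 : (Finset.univ : Finset (Fin n)).card ≤ ({i, j} : Finset (Fin n)).card :=
        Finset.card_le_card fun x _ => h x
      have h2 : ({i, j} : Finset (Fin n)).card ≤ 2 :=
        (Finset.card_insert_le _ _).trans (by simp)
      rw [Finset.card_univ, Fintype.card_fin] at h1
      omega
    simp only [Finset.mem_insert, Finset.mem_singleton, not_or] at hk
    obtain ⟨hki, hkj⟩ := hk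
    set A := Matrix.single i k c with hA
    set B := Matrix.single k j (1 : ZMod 2) with hB
    have hAA : A * A = 0 := Matrix.single_mul_single_of_ne _ _ _ _ hki _
    have hBB : B * B = 0 := Matrix.single_mul_single_of_ne _ _ _ _ (Ne.symm hkj) _
    have hAB : A * B = Matrix.single i j c := by
      rw [hA, hB, Matrix.single_mul_single_same, mul_one]
    have hBA : B * A = 0 :=
      Matrix.single_mul_single_of_ne _ _ _ _ (Ne.symm hij) _
    have char2 : ∀ X : Matrix (Fin n) (Fin n) (ZMod 2), X + X = 0 := by
      intro X
      ext a b
      simpa using CharTwo.add_self_eq_zero (X a b)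
    set P := (1 : Matrix (Fin n) (Fin n) (ZMod 2)) + A with hP
    set Q := (1 : Matrix (Fin n) (Fin n) (ZMod 2)) + B with hQ
    have hPP : P * P = 1 := by
      have h1 : P * P = 1 + (A + A) + A * A := by rw [hP]; noncomm_ring
      rw [h1, char2, hAA, add_zero, add_zero]
    have hQQ : Q * Q = 1 := by
      have h1 : Q * Q = 1 + (B + B) + B * B := by rw [hQ]; noncomm_ring
      rw [h1, char2, hBB, add_zero, add_zero]
    have hXX : (A + B + A * B) * (A + B + A * B) = A * B := by
      have expand : (A + B + A * B) * (A + B + A * B) =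
          A*A + A*B + A*(A*B) + B*A + B*B + B*(A*B) + (A*B)*A + (A*B)*B + (A*B)*(A*B) := by
        noncomm_ring
      have h1 : A*(A*B) = 0 := by rw [← mul_assoc, hAA, zero_mul]
      have h2 : B*(A*B) = 0 := by rw [← mul_assoc, hBA, zero_mul]
      have h3 : (A*B)*A = 0 := by rw [mul_assoc, hBA, mul_zero]
      have h4 : (A*B)*B = 0 := by rw [mul_assoc, hBB, mul_zero]
      have h5 : (A*B)*(A*B) = 0 := by rw [mul_assoc, ← mul_assoc B, hBA, zero_mul, mul_zero]
      rw [expand, hAA, hBB, hBA, h1, h2, h3, h4, h5]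
      abel
    have hcomm : P * (Q * (P * Q)) = Matrix.transvection i j c := by
      have hPQ : P * Q = 1 + (A + B + A * B) := by rw [hP, hQ]; noncomm_ring
      have h1 : P * (Q * (P * Q)) = (P * Q) * (P * Q) := by noncomm_ring
      rw [h1, hPQ]
      have h2 : (1 + (A + B + A*B)) * (1 + (A + B + A*B)) =
          1 + ((A + B + A*B) + (A + B + A*B)) + (A + B + A*B) * (A + B + A*B) := by
        noncomm_ring
      rw [h2, char2, hXX, add_zero, Matrix.transvection, hAB]
    set eP := equivOfInvol P hPP with heP
    set eQ := equivOfInvol Q hQQ with heQ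
    have hFeq : F.toEquiv =
        (eP.toEquiv * (eQ.toEquiv * (eP.toEquiv * eQ.toEquiv)) : Equiv.Perm (Fin n → ZMod 2)) := by
      apply Equiv.ext; intro x
      have h1 := DFunLike.congr_fun hF x
      rw [Matrix.TransvectionStruct.toMatrix_mk, ← hcomm, Matrix.mulVecLin_mul,
        Matrix.mulVecLin_mul, Matrix.mulVecLin_mul] at h1
      exact h1
    rw [hFeq, _root_.map_mul, _root_.map_mul, _root_.map_mul]
    generalize Equiv.Perm.sign eP.toEquiv = a
    generalize Equiv.Perm.sign eQ.toEquiv = b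
    rw [show a * (b * (a * b)) = (a * b) * (a * b) by rw [mul_assoc],
      mul_mul_mul_comm, Int.units_mul_self, Int.units_mul_self, one_mul]
  · -- multiplication case
    intro A B hdA hdB hA hB F hF
    have hFfun : ∀ x, F x = A.mulVecLin (B.mulVecLin x) := by
      intro x
      have h1 := DFunLike.congr_fun hF x
      rw [Matrix.mulVecLin_mul] at h1
      exact h1
    have hBinj : Function.Injective B.mulVecLin := by
      have hcomp : Function.Injective (fun x => A.mulVecLin (B.mulVecLin x)) := by
        intro x y h
        have : F x = F y := by rw [hFfun, hFfun]; exact h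
        exact F.injective this
      exact Function.Injective.of_comp hcomp
    have hBbij : Function.Bijective B.mulVecLin :=
      Finite.injective_iff_bijective.1 hBinj
    have hAsurj : Function.Surjective A.mulVecLin := by
      intro y
      obtain ⟨x, hx⟩ := F.surjective y
      exact ⟨B.mulVecLin x, by rw [← hFfun, hx]⟩
    have hAbij : Function.Bijective A.mulVecLin :=
      Finite.surjective_iff_bijective.1 hAsurj
    set eA := LinearEquiv.ofBijective A.mulVecLin hAbij with heA
    set eB := LinearEquiv.ofBijective B.mulVecLin hBbij with heB
    have hFeq : F.toEquiv = (eA.toEquiv * eB.toEquiv : Equiv.Perm (Fin n → ZMod 2)) := by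
      apply Equiv.ext; intro x
      simpa [heA, heB] using hFfun x
    rw [hFeq, _root_.map_mul, hA eA rfl, hB eB rfl, mul_one]

theorem linear_even (n : ℕ) (hn : 3 ≤ n)
    (F : (Fin n → ZMod 2) ≃ₗ[ZMod 2] (Fin n → ZMod 2)) :
    Equiv.Perm.sign (F.toEquiv : Equiv.Perm (Fin n → ZMod 2)) = 1 := by
  set M := LinearMap.toMatrix' F.toLinearMap with hM
  have hFM : F.toLinearMap = M.mulVecLin := by
    apply LinearMap.ext
    intro x
    rw [Matrix.mulVecLin_apply, ← Matrix.toLin'_apply, hM, Matrix.toLin'_toMatrix']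
  have hunit : IsUnit F.toLinearMap := by
    refine ⟨⟨F.toLinearMap, F.symm.toLinearMap, ?_, ?_⟩, rfl⟩
    · ext x; simp [Module.End.mul_apply]
    · ext x; simp [Module.End.mul_apply]
  have hMunit : IsUnit M := by
    rw [hM]
    exact hunit.map (LinearMap.toMatrixAlgEquiv' : ((Fin n → ZMod 2) →ₗ[ZMod 2] (Fin n → ZMod 2)) ≃ₐ[ZMod 2] Matrix (Fin n) (Fin n) (ZMod 2))
  have hdet : M.det ≠ 0 := by
    have := (Matrix.isUnit_iff_isUnit_det M).1 hMunit
    exact this.ne_zero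
  exact sign_aux n hn M hdet F hFM
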